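/- arXiv:0911.1007 — 6 statements merged into one kernel-verified Lean document; each statement's English description precedes it below -/
import Mathlib

section
/- For every τ with 0 < τ < 1/2, τ ≠ 1/3, the parameter values a = τ² - 2τ³, β = δ/(2τ(1-τ)²) (for any δ > 0) are positive, and x₀ = τ is a double root of the cubic F(x) = x³ - x² + (a + δ/β)x - a, i.e., F(τ) = 0 and F'(τ) = 0. -/
/-- For every `τ ∈ (0, 1/2)` with `τ ≠ 1/3`, and any `δ > 0`, the parameters
`a = τ² - 2τ³`, `β = δ/(2τ(1-τ)²)` are positive and `x₀ = τ` is a double root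
of the cubic `F(x) = x³ - x² + (a + δ/β)x - a`: `F(τ) = 0` and `F'(τ) = 0`. -/
theorem stmt5 (τ δ : ℝ) (hτ0 : 0 < τ) (hτ1 : τ < 1 / 2) (hτ3 : τ ≠ 1 / 3)
    (hδ : 0 < δ) :
    let a : ℝ := τ ^ 2 - 2 * τ ^ 3
    let β : ℝ := δ / (2 * τ * (1 - τ) ^ 2)
    let F : ℝ → ℝ := fun x => x ^ 3 - x ^ 2 + (a + δ / β) * x - a
    0 < a ∧ 0 < β ∧ F τ = 0 ∧ deriv F τ = 0 := by
  intro a β F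
  have hτ1' : (0:ℝ) < 1 - τ := by linarith
  have hden : (0:ℝ) < 2 * τ * (1 - τ) ^ 2 := by positivity
  have hβ : 0 < β := div_pos hδ hden
  have hδβ : δ / β = 2 * τ * (1 - τ) ^ 2 := by
    simp only [β, div_div_eq_mul_div, div_div_eq_mul_div]
    field_simp
  have ha : 0 < a := by
    have : a = τ ^ 2 * (1 - 2 * τ) := by ring
    rw [this]; have : (0:ℝ) < 1 - 2 * τ := by linarith
    positivity
  refine ⟨ha, hβ, ?_, ?_⟩
  · show τ ^ 3 - τ ^ 2 + (a + δ / β) * τ - a = 0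
    rw [hδβ]; simp only [a]; ring
  · have hd : deriv F τ = 3 * τ ^ 2 - 2 * τ + (a + δ / β) := by
      have : HasDerivAt F (3 * τ ^ 2 - 2 * τ + (a + δ / β)) τ := by
        have h1 : HasDerivAt (fun x : ℝ => x ^ 3 - x ^ 2 + (a + δ / β) * x - a)
            (3 * τ ^ 2 - 2 * τ + (a + δ / β)) τ := by
          have := ((hasDerivAt_pow 3 τ).sub (hasDerivAt_pow 2 τ)).add
            ((hasDerivAt_id τ).const_mul (a + δ / β))
          convert this.sub_const a using 1
          all_goals first | rfl | (funext x; simp) | norm_num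
        exact h1
      exact this.deriv
    rw [hd, hδβ]; simp only [a]; ring
end

section
/- Conversely, if a, β, δ > 0 and x₀ ∈ (0,1) satisfy F(x₀) = 0 and F'(x₀) = 0 for F(x) = x³ - x² + (a + δ/β)x - a, then a = x₀² - 2x₀³ and β = δ/(2x₀(1-x₀)²), and necessarily 0 < x₀ < 1/2. -/
/-- If `a, β, δ > 0` and `x₀ ∈ (0,1)` is a double root of
`F(x) = x³ - x² + (a + δ/β)x - a` (i.e. `F(x₀) = F'(x₀) = 0`), then
`a = x₀² - 2x₀³`, `β = δ/(2x₀(1-x₀)²)`, and necessarily `x₀ < 1/2`. -/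
theorem stmt6 (a β δ x₀ : ℝ) (ha : 0 < a) (hβ : 0 < β) (hδ : 0 < δ)
    (hx : x₀ ∈ Set.Ioo (0:ℝ) 1)
    (hF : x₀ ^ 3 - x₀ ^ 2 + (a + δ / β) * x₀ - a = 0)
    (hF' : deriv (fun x : ℝ => x ^ 3 - x ^ 2 + (a + δ / β) * x - a) x₀ = 0) :
    a = x₀ ^ 2 - 2 * x₀ ^ 3 ∧ β = δ / (2 * x₀ * (1 - x₀) ^ 2) ∧ x₀ < 1 / 2 := by
  obtain ⟨hx0, hx1⟩ := hx
  have hd : (3 : ℝ) * x₀ ^ 2 - 2 * x₀ + (a + δ / β) = 0 := by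
    have h : HasDerivAt (fun x : ℝ => x ^ 3 - x ^ 2 + (a + δ / β) * x - a)
        (3 * x₀ ^ 2 - 2 * x₀ + (a + δ / β)) x₀ := by
      have := (((hasDerivAt_pow 3 x₀).sub (hasDerivAt_pow 2 x₀)).add
        ((hasDerivAt_id x₀).const_mul (a + δ / β))).sub_const a
      convert this using 1
      all_goals first | rfl | (push_cast; ring)
    rw [h.deriv] at hF'
    exact hF'
  have hsum : a + δ / β = 2 * x₀ - 3 * x₀ ^ 2 := by linarith
  have haeq : a = x₀ ^ 2 - 2 * x₀ ^ 3 := by nlinarith [hF, hsum]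
  have hdb : δ / β = 2 * x₀ * (1 - x₀) ^ 2 := by nlinarith [hsum, haeq]
  have hhalf : x₀ < 1 / 2 := by nlinarith
  refine ⟨haeq, ?_, hhalf⟩
  have h1 : (0:ℝ) < 1 - x₀ := by linarith
  have h2 : (2 : ℝ) * x₀ * (1 - x₀) ^ 2 > 0 := by positivity
  field_simp at hdb ⊢
  linarith [hdb]
end

section
/- For 0 < τ < 1, setting a = τ² - 2τ³, β = 1/(2τ(1-τ)), δ = 1 - τ, and assuming a > 0 (i.e., τ < 1/2), the point (x₀, y₀) = (τ, δτ/β) is an equilibrium of the system at which the Jacobian matrix has both trace and determinant equal to zero (Bogdanov–Takens point). -/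
/-- For `0 < τ < 1` with `a = τ² - 2τ³ > 0` (i.e. `τ < 1/2`), `β = 1/(2τ(1-τ))`,
`δ = 1 - τ`, the point `(x₀,y₀) = (τ, δτ/β)` is an equilibrium of the system
`ẋ = x(1-x) - xy/(a+x²)`, `ẏ = y(δ - βy/x)` at which both the trace and the
determinant of the Jacobian vanish (Bogdanov–Takens point); the trace and
determinant are proportional to the stated polynomial expressions. -/
theorem stmt8 (τ : ℝ) (hτ0 : 0 < τ) (hτ1 : τ < 1) :
    let a : ℝ := τ ^ 2 - 2 * τ ^ 3
    let β : ℝ := 1 / (2 * τ * (1 - τ))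
    let δ : ℝ := 1 - τ
    0 < a →
    let x₀ : ℝ := τ
    let y₀ : ℝ := δ * τ / β
    -- (x₀, y₀) is an equilibrium:
    (x₀ * (1 - x₀) - x₀ * y₀ / (a + x₀ ^ 2) = 0 ∧ y₀ * (δ - β * y₀ / x₀) = 0) ∧
    -- the trace of the Jacobian vanishes (trace ∝ aδ + ax₀ - 2x₀² + δx₀² + 3x₀³):
    a * δ + a * x₀ - 2 * x₀ ^ 2 + δ * x₀ ^ 2 + 3 * x₀ ^ 3 = 0 ∧
    -- the determinant of the Jacobian vanishes:
    -a ^ 2 * β + 2 * a ^ 2 * β * x₀ + 2 * a * δ * x₀ - 2 * a * β * x₀ ^ 2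
      + 4 * a * β * x₀ ^ 3 - β * x₀ ^ 4 + 2 * β * x₀ ^ 5 = 0 := by

  intro a β δ ha x₀ y₀
  have hτ : τ ≠ 0 := ne_of_gt hτ0
  have h1 : (1 : ℝ) - τ ≠ 0 := by linarith
  have hβ : β ≠ 0 := by
    simp only [β]
    positivity
  have hax : a + x₀ ^ 2 ≠ 0 := by positivity
  refine ⟨⟨?_, ?_⟩, ?_, ?_⟩
  · simp only [x₀, y₀, a, β, δ]
    have h2 : (2 : ℝ) - τ * 2 ≠ 0 := by intro h; apply h1; linarith
    field_simp
    ring_nf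
    field_simp
    ring
  · simp only [x₀, y₀, a, β, δ]
    field_simp
    ring
  · simp only [x₀, a, δ]
    ring
  · simp only [x₀, a, β, δ]
    field_simp
    ring
end

section
/- With a = -45 + 26√3, β = (5 + 3√3)/4, δ = √3 - 1, all three parameters are positive, and there exists x₀ ∈ (0,1) such that F(x₀) = F'(x₀) = 0 and the trace of the Jacobian at the corresponding equilibrium vanishes. -/
/-- With `a = -45 + 26√3`, `β = (5 + 3√3)/4`, `δ = √3 - 1`, all three parameters
are positive, and there exists `x₀ ∈ (0,1)` with `F(x₀) = F'(x₀) = 0` and the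
trace of the Jacobian at the corresponding equilibrium vanishing
(`aδ + ax₀ - 2x₀² + δx₀² + 3x₀³ = 0`). -/
theorem stmt10 :
    let a : ℝ := -45 + 26 * Real.sqrt 3
    let β : ℝ := (5 + 3 * Real.sqrt 3) / 4
    let δ : ℝ := Real.sqrt 3 - 1
    0 < a ∧ 0 < β ∧ 0 < δ ∧
    ∃ x₀ ∈ Set.Ioo (0:ℝ) 1,
      x₀ ^ 3 - x₀ ^ 2 + (a + δ / β) * x₀ - a = 0 ∧
      deriv (fun x : ℝ => x ^ 3 - x ^ 2 + (a + δ / β) * x - a) x₀ = 0 ∧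
      a * δ + a * x₀ - 2 * x₀ ^ 2 + δ * x₀ ^ 2 + 3 * x₀ ^ 3 = 0 := by
  intro a β δ
  have hs : Real.sqrt 3 ^ 2 = 3 := Real.sq_sqrt (by norm_num)
  have hs1 : (1.7 : ℝ) < Real.sqrt 3 := by nlinarith [Real.sqrt_nonneg 3]
  have hs2 : Real.sqrt 3 < 1.8 := by nlinarith [Real.sqrt_nonneg 3]
  have ha : 0 < a := by simp only [a]; nlinarith
  have hβpos : 0 < β := by simp only [β]; nlinarith
  have hδ : 0 < δ := by simp only [δ]; nlinarith
  have hβne : (5 + 3 * Real.sqrt 3 : ℝ) ≠ 0 := by nlinarith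
  have hc : a + δ / β = -17 + 10 * Real.sqrt 3 := by
    simp only [a, β, δ]
    rw [div_div_eq_mul_div]
    field_simp
    nlinarith
  refine ⟨ha, hβpos, hδ, 2 - Real.sqrt 3, ⟨by nlinarith, by nlinarith⟩, ?_, ?_, ?_⟩
  · rw [hc]; simp only [a]; nlinarith [hs, sq_nonneg (Real.sqrt 3)]
  · have hd : HasDerivAt (fun x : ℝ => x ^ 3 - x ^ 2 + (a + δ / β) * x - a)
        (3 * (2 - Real.sqrt 3) ^ 2 - 2 * (2 - Real.sqrt 3) + (a + δ / β))
        (2 - Real.sqrt 3) := by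
      have h1 := (hasDerivAt_pow 3 (2 - Real.sqrt 3)).sub
        (hasDerivAt_pow 2 (2 - Real.sqrt 3))
      have h2 := (h1.add ((hasDerivAt_id (2 - Real.sqrt 3)).const_mul (a + δ / β))).sub_const a
      convert h2 using 1
      all_goals first | rfl | norm_num
    rw [hd.deriv, hc]; nlinarith
  · simp only [a, δ]; nlinarith
end

section
/- For 0 < τ < 1 with 2 - δ - 3τ > 0 and δ + τ > 0, setting a = τ²(2 - δ - 3τ)/(δ + τ) and β = δ(δ + τ)/(2τ(1-τ)²), the point x₀ = τ satisfies F(x₀) = 0 and the trace condition aδ + ax₀ - 2x₀² + δx₀² + 3x₀³ = 0. -/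
/-- For `0 < τ < 1`, `δ > 0`, with `2 - δ - 3τ > 0` and `δ + τ > 0`, setting
`a = τ²(2 - δ - 3τ)/(δ + τ)` and `β = δ(δ + τ)/(2τ(1-τ)²)`, the point `x₀ = τ`
satisfies `F(x₀) = 0` and the trace condition
`aδ + ax₀ - 2x₀² + δx₀² + 3x₀³ = 0` (Andronov–Hopf surface H). -/
theorem stmt11 (τ δ : ℝ) (hτ0 : 0 < τ) (hτ1 : τ < 1) (hδ : 0 < δ)
    (h1 : 0 < 2 - δ - 3 * τ) (h2 : 0 < δ + τ) :
    let a : ℝ := τ ^ 2 * (2 - δ - 3 * τ) / (δ + τ)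
    let β : ℝ := δ * (δ + τ) / (2 * τ * (1 - τ) ^ 2)
    let x₀ : ℝ := τ
    x₀ ^ 3 - x₀ ^ 2 + (a + δ / β) * x₀ - a = 0 ∧
    a * δ + a * x₀ - 2 * x₀ ^ 2 + δ * x₀ ^ 2 + 3 * x₀ ^ 3 = 0 := by
  intro a β x₀
  have hs : (δ + τ) ≠ 0 := ne_of_gt h2
  have h1τ : (0:ℝ) < 1 - τ := by linarith
  have hβd : (2 * τ * (1 - τ) ^ 2) ≠ 0 := by positivity
  have hδβ : δ / β = 2 * τ * (1 - τ) ^ 2 / (δ + τ) := by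
    show δ / (δ * (δ + τ) / (2 * τ * (1 - τ) ^ 2)) = _
    field_simp
  constructor
  · show τ ^ 3 - τ ^ 2 + (a + δ / β) * τ - a = 0
    rw [hδβ]
    show τ ^ 3 - τ ^ 2 + (τ ^ 2 * (2 - δ - 3 * τ) / (δ + τ) + 2 * τ * (1 - τ) ^ 2 / (δ + τ)) * τ - τ ^ 2 * (2 - δ - 3 * τ) / (δ + τ) = 0
    field_simp
    ring
  · show τ ^ 2 * (2 - δ - 3 * τ) / (δ + τ) * δ + τ ^ 2 * (2 - δ - 3 * τ) / (δ + τ) * τ - 2 * τ ^ 2 + δ * τ ^ 2 + 3 * τ ^ 3 = 0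
    field_simp
    ring
end

section
/- At an equilibrium (x₀, y₀) with y₀ = (δ/β)x₀ satisfying F(x₀) = 0, the determinant of the Jacobian of the system equals a positive constant times -a²β + 2a²βx₀ + 2aδx₀ - 2aβx₀² + 4aβx₀³ - βx₀⁴ + 2βx₀⁵, and its trace equals a positive constant times aδ + ax₀ - 2x₀² + δx₀² + 3x₀³ (up to sign conventions given in the paper). -/
set_option maxHeartbeats 1000000 in


/-- At an equilibrium `(x₀, y₀)` with `y₀ = (δ/β)x₀` and `F(x₀) = 0`, the
determinant of the Jacobian of the vector field of system (2) equals a positive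
constant times `-a²β + 2a²βx₀ + 2aδx₀ - 2aβx₀² + 4aβx₀³ - βx₀⁴ + 2βx₀⁵`, and
its trace equals a positive constant times
`aδ + ax₀ - 2x₀² + δx₀² + 3x₀³` up to sign (the sign convention of the paper:
here the trace is `-k₂` times that expression with `k₂ > 0`). -/
theorem stmt17 (a β δ x₀ y₀ : ℝ) (ha : 0 < a) (hβ : 0 < β) (hδ : 0 < δ)
    (hx : x₀ ∈ Set.Ioo (0:ℝ) 1) (hy : y₀ = (δ / β) * x₀)
    (hF : x₀ ^ 3 - x₀ ^ 2 + (a + δ / β) * x₀ - a = 0) :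
    let V : ℝ × ℝ → ℝ × ℝ := fun p =>
      (p.1 * (1 - p.1) - p.1 * p.2 / (a + p.1 ^ 2),
        p.2 * (δ - β * p.2 / p.1))
    let J : ℝ × ℝ →L[ℝ] ℝ × ℝ := fderiv ℝ V (x₀, y₀)
    let trJ : ℝ := (J (1, 0)).1 + (J (0, 1)).2
    let detJ : ℝ := (J (1, 0)).1 * (J (0, 1)).2 - (J (1, 0)).2 * (J (0, 1)).1
    (∃ k₁ : ℝ, 0 < k₁ ∧
      detJ = k₁ * (-a ^ 2 * β + 2 * a ^ 2 * β * x₀ + 2 * a * δ * x₀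
        - 2 * a * β * x₀ ^ 2 + 4 * a * β * x₀ ^ 3 - β * x₀ ^ 4
        + 2 * β * x₀ ^ 5)) ∧
    (∃ k₂ : ℝ, 0 < k₂ ∧
      trJ = -k₂ * (a * δ + a * x₀ - 2 * x₀ ^ 2 + δ * x₀ ^ 2 + 3 * x₀ ^ 3)) := by
  intro V J trJ detJ
  obtain ⟨hx0, hx1⟩ := hx
  have hA : (0:ℝ) < a + x₀ * x₀ := by positivity
  have hA2 : (0:ℝ) < a + x₀ ^ 2 := by positivity
  have hfst : HasFDerivAt (fun p : ℝ × ℝ => p.1) (ContinuousLinearMap.fst ℝ ℝ ℝ) (x₀, y₀) :=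
    hasFDerivAt_fst
  have hsnd : HasFDerivAt (fun p : ℝ × ℝ => p.2) (ContinuousLinearMap.snd ℝ ℝ ℝ) (x₀, y₀) :=
    hasFDerivAt_snd
  have hden := ((hfst.mul hfst).const_add a)
  have hinv := (hasFDerivAt_inv (x := a + x₀ * x₀) hA.ne').comp (x₀, y₀) hden
  have hinv2 := (hasFDerivAt_inv (x := x₀) hx0.ne').comp (x₀, y₀) hfst
  have h1 := (hfst.mul (hfst.const_sub 1)).sub ((hfst.mul hsnd).mul hinv)
  have h2 := hsnd.mul (((hsnd.const_mul β).mul hinv2).const_sub δ)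
  have hV := HasFDerivAt.prodMk h1 h2
  have hVeq : V = (fun x : ℝ × ℝ =>
      (x.1 * (1 - x.1) - x.1 * x.2 * ((fun x : ℝ => x⁻¹) ∘ fun x : ℝ × ℝ => a + x.1 * x.1) x,
        x.2 * (δ - β * x.2 * ((fun x : ℝ => x⁻¹) ∘ fun p : ℝ × ℝ => p.1) x))) := by
    funext p
    simp only [V, Function.comp, div_eq_mul_inv, Prod.mk.injEq]
    constructor <;> first | ring_nf | trivial
  have hJ := hV.fderiv
  rw [show (fun x : ℝ × ℝ => _) = V from ?_] at hJ
  swap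
  · funext p
    simp only [V, Function.comp, div_eq_mul_inv, Prod.mk.injEq, Pi.mul_apply, Pi.sub_apply]
    constructor <;> first | ring | trivial
  have e11 : (J (1, 0)).1 = 1 - 2*x₀ - y₀*(a - x₀^2)/(a+x₀^2)^2 := by
    show (fderiv ℝ V (x₀, y₀) (1, 0)).1 = _
    rw [hJ]
    simp [ContinuousLinearMap.smulRight_apply]
    field_simp
    ring
  have e12 : (J (0, 1)).1 = -x₀/(a+x₀^2) := by
    show (fderiv ℝ V (x₀, y₀) (0, 1)).1 = _
    rw [hJ]
    simp [ContinuousLinearMap.smulRight_apply]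
    field_simp
    try ring
    try tauto
  have e21 : (J (1, 0)).2 = β*y₀^2/x₀^2 := by
    show (fderiv ℝ V (x₀, y₀) (1, 0)).2 = _
    rw [hJ]
    simp [ContinuousLinearMap.smulRight_apply]
    field_simp
    try ring
    try tauto
  have e22 : (J (0, 1)).2 = δ - 2*β*y₀/x₀ := by
    show (fderiv ℝ V (x₀, y₀) (0, 1)).2 = _
    rw [hJ]
    simp [ContinuousLinearMap.smulRight_apply]
    field_simp
    try ring
    try tauto
  have hδ2 : δ = β*(1-x₀)*(a+x₀^2)/x₀ := by
    have h1 : δ * x₀ = a*β - a*β*x₀ + β*x₀^2 - β*x₀^3 := by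
      field_simp at hF
      linarith
    field_simp
    linarith
  refine ⟨⟨δ/(β*(a+x₀^2)^2), by positivity, ?_⟩, ⟨1/(a+x₀^2), by positivity, ?_⟩⟩
  · show (J (1, 0)).1 * (J (0, 1)).2 - (J (1, 0)).2 * (J (0, 1)).1 = _
    rw [e11, e12, e21, e22, hy, hδ2]
    field_simp
    ring
  · show (J (1, 0)).1 + (J (0, 1)).2 = _
    rw [e11, e22, hy, hδ2]
    field_simp
    ring
end
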